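/- Let u be a string of length r, π = κ(u) its Karp-Rabin fingerprint, d = b^r mod p, k ≥ 1, and 0 ≤ j ≤ r. Then the fingerprint of u^k·u[1..j] equals (π · G(d, k-1) · (b^j mod p) + κ(u[1..j])) mod p, where G(d, k-1) = (d^{k-1} + ... + d + 1) mod p. -/

import Mathlib

/-- Karp-Rabin fingerprint of `s` with base `b` modulo `p`. -/
def kappa (p b : ℕ) (s : List ℕ) : ℕ :=
  (∑ i ∈ Finset.range s.length, s.getD (s.length - 1 - i) 0 * b ^ i) % p

/-- `k`-fold concatenation of a string with itself. -/
def listPow {α : Type*} (x : List α) (k : ℕ) : List α := (List.replicate k x).flatten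

/-- The un-reduced Karp-Rabin value. -/
def krVal (b : ℕ) (s : List ℕ) : ℕ :=
  ∑ i ∈ Finset.range s.length, s.getD (s.length - 1 - i) 0 * b ^ i

lemma krVal_snoc (b c : ℕ) (s : List ℕ) : krVal b (s ++ [c]) = krVal b s * b + c := by
  unfold krVal
  rw [List.length_append, List.length_singleton, Finset.sum_range_succ']
  have h0 : (s ++ [c]).getD (s.length + 1 - 1 - 0) 0 = c := by
    simp [List.getD_append_right]
  have h1 : ∀ i ∈ Finset.range s.length,
      (s ++ [c]).getD (s.length + 1 - 1 - (i + 1)) 0 * b ^ (i + 1)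
        = s.getD (s.length - 1 - i) 0 * b ^ i * b := by
    intro i hi
    rw [Finset.mem_range] at hi
    have : s.length + 1 - 1 - (i + 1) = s.length - 1 - i := by omega
    rw [this, List.getD_append _ _ _ _ (by omega), pow_succ]
    ring
  rw [Finset.sum_congr rfl h1, h0, ← Finset.sum_mul]
  ring

lemma krVal_append (b : ℕ) (x y : List ℕ) :
    krVal b (x ++ y) = krVal b x * b ^ y.length + krVal b y := by
  induction y using List.reverseRecOn with
  | nil => simp [krVal]
  | append_singleton ys c ih =>
      rw [← List.append_assoc, krVal_snoc, ih, krVal_snoc]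
      simp [List.length_append, pow_succ]
      ring

lemma krVal_pow (b : ℕ) (u : List ℕ) (k : ℕ) :
    krVal b (listPow u k) = krVal b u * ∑ i ∈ Finset.range k, (b ^ u.length) ^ i := by
  induction k with
  | zero => simp [listPow, krVal]
  | succ k ih =>
      have h1 : listPow u (k + 1) = u ++ listPow u k := by
        simp [listPow, List.replicate_succ]
      have hlen : (listPow u k).length = k * u.length := by
        simp [listPow, List.length_flatten, Finset.sum_const, mul_comm]
      rw [h1, krVal_append, ih, hlen, Finset.sum_range_succ]
      ring_nf

/-- For `u` of length `r`, `k ≥ 1`, `0 ≤ j ≤ r`, `d = b^r mod p`: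
`κ(u^k·u[1..j]) = (κ(u)·G(d,k-1)·(b^j mod p) + κ(u[1..j])) mod p`,
where `G(d,k-1) = (d^{k-1} + ⋯ + d + 1) mod p`. -/
theorem kr_power_prefix (p b : ℕ) (hp : p.Prime) (u : List ℕ) (r k j : ℕ)
    (hr : u.length = r) (hk : 1 ≤ k) (hj : j ≤ r) :
    kappa p b (listPow u k ++ u.take j) =
      (kappa p b u * ((∑ i ∈ Finset.range k, (b ^ r % p) ^ i) % p) * (b ^ j % p)
        + kappa p b (u.take j)) % p := by
  have htj : (u.take j).length = j := by simp [hr, hj]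
  have hL : kappa p b (listPow u k ++ u.take j)
      = (krVal b u * (∑ i ∈ Finset.range k, (b ^ r) ^ i) * b ^ j + krVal b (u.take j)) % p := by
    show krVal b _ % p = _
    rw [krVal_append, krVal_pow, htj, hr]
  rw [hL]
  apply (ZMod.natCast_eq_natCast_iff _ _ _).mp
  show ((_ : ℕ) : ZMod p) = _
  unfold kappa krVal
  push_cast [ZMod.natCast_mod]
  ring
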